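/- Let ρ be a state on C^d ⊗ C^d whose partial transpose ρ^{T_B} has a negative eigenvalue λ with unit eigenvector ψ, and suppose R ≥ 0 is such that W = |ψ⟩⟨ψ| + R·I has Schmidt number 2 (i.e., W/Tr(W) is a density matrix of Schmidt number ≤ 2). If λ < −R, then ρ is 1-distillable: there exists a Schmidt-rank-2 unit vector φ with ⟨φ, ρ^{T_B} φ⟩ < 0. -/

import Mathlib

open scoped BigOperators ComplexConjugate ComplexOrder

noncomputable section

/-- The partial transpose on the second tensor factor. -/
def ptB {d : ℕ} (ρ : Matrix (Fin d × Fin d) (Fin d × Fin d) ℂ) :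
    Matrix (Fin d × Fin d) (Fin d × Fin d) ℂ :=
  fun p q => ρ (p.1, q.2) (q.1, p.2)

/-- A vector of `ℂ^d ⊗ ℂ^d` has Schmidt rank at most `n`. -/
def SchmidtRankLE (d n : ℕ) (ψ : Fin d × Fin d → ℂ) : Prop :=
  ∃ a b : Fin n → Fin d → ℂ, ∀ p, ψ p = ∑ i, a i p.1 * b i p.2

/-- A positive operator has Schmidt number at most `n` if it is a nonnegative
combination of pure states of Schmidt rank at most `n`. -/
def SchmidtNumberLE (d n : ℕ) (ρ : Matrix (Fin d × Fin d) (Fin d × Fin d) ℂ) : Prop :=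
  ∃ (m : ℕ) (c : Fin m → ℝ) (ψ : Fin m → Fin d × Fin d → ℂ),
    (∀ t, 0 ≤ c t) ∧ (∀ t, SchmidtRankLE d n (ψ t)) ∧
    ∀ p q, ρ p q = ∑ t, (c t : ℂ) * (ψ t p * conj (ψ t q))

/-- If `ρ^{T_B}` has a negative eigenvalue `λ` with unit eigenvector `ψ`, and
`W = |ψ⟩⟨ψ| + R·I` has Schmidt number at most `2` with `λ < −R`, then `ρ` is
1-distillable: some Schmidt-rank-2 unit vector `φ` has `⟨φ, ρ^{T_B} φ⟩ < 0`. -/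
theorem one_distillable_of_schmidt_robustness (d : ℕ) (hd : 0 < d)
    (ρ : Matrix (Fin d × Fin d) (Fin d × Fin d) ℂ)
    (hpsd : ρ.PosSemidef) (htr : ρ.trace = 1)
    (lam : ℝ) (hlamneg : lam < 0)
    (ψ : Fin d × Fin d → ℂ) (hψ : ∑ p, ‖ψ p‖ ^ 2 = 1)
    (heig : (ptB ρ).mulVec ψ = (lam : ℂ) • ψ)
    (R : ℝ) (hR : 0 ≤ R)
    (hW : SchmidtNumberLE d 2
        (Matrix.of (fun p q : Fin d × Fin d => ψ p * conj (ψ q)) +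
          (R : ℂ) • (1 : Matrix (Fin d × Fin d) (Fin d × Fin d) ℂ)))
    (hlt : lam < -R) :
    ∃ φ : Fin d × Fin d → ℂ,
      SchmidtRankLE d 2 φ ∧ (∑ p, ‖φ p‖ ^ 2 = 1) ∧
      (dotProduct (star φ) ((ptB ρ).mulVec φ)).re < 0 := by
  classical
  obtain ⟨m, c, Ψ, hc, hrank, hWeq⟩ := hW
  set M := ptB ρ with hMdef
  have hnorm1 : (∑ q, conj (ψ q) * ψ q) = 1 := by
    have h1 : ∀ q : Fin d × Fin d, conj (ψ q) * ψ q = ((‖ψ q‖ ^ 2 : ℝ) : ℂ) := by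
      intro q; rw [Complex.conj_mul']; push_cast; ring
    rw [Finset.sum_congr rfl (fun q _ => h1 q), ← Complex.ofReal_sum, hψ]; norm_num
  -- quadratic form of ψ equals lam
  have hQψ : dotProduct (star ψ) (M.mulVec ψ) = (lam : ℂ) := by
    rw [heig]
    simp only [dotProduct, Pi.star_apply, Pi.smul_apply, smul_eq_mul]
    calc ∑ x, star (ψ x) * ((lam : ℂ) * ψ x)
        = (lam : ℂ) * ∑ x, conj (ψ x) * ψ x := by
          rw [Finset.mul_sum]
          exact Finset.sum_congr rfl fun x _ => by rw [Complex.star_def]; ring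
      _ = (lam : ℂ) := by rw [hnorm1, mul_one]
  -- trace of M is 1
  have htrM : (∑ p, M p p) = 1 := by
    have : ∀ p : Fin d × Fin d, M p p = ρ p p := by
      intro p; simp [hMdef, ptB]
    rw [Finset.sum_congr rfl (fun p _ => this p)]
    simpa [Matrix.trace, Matrix.diag] using htr
  -- the trace pairing computed two ways
  set W : Matrix (Fin d × Fin d) (Fin d × Fin d) ℂ :=
    Matrix.of (fun p q : Fin d × Fin d => ψ p * conj (ψ q)) + (R : ℂ) • 1 with hWdef
  have hS1 : (∑ p, ∑ q, W p q * M q p) = (lam : ℂ) + R := by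
    have hW' : ∀ p q : Fin d × Fin d,
        W p q = ψ p * conj (ψ q) + (R : ℂ) * (if p = q then 1 else 0) := by
      intro p q
      simp [hWdef, Matrix.one_apply, Matrix.add_apply, Matrix.smul_apply]
    calc (∑ p, ∑ q, W p q * M q p)
        = ∑ p, ∑ q, (ψ p * conj (ψ q) * M q p
            + (R : ℂ) * (if p = q then 1 else 0) * M q p) := by
          refine Finset.sum_congr rfl fun p _ => Finset.sum_congr rfl fun q _ => ?_
          rw [hW' p q]; ring
      _ = (∑ p, ∑ q, ψ p * conj (ψ q) * M q p) + (R : ℂ) * ∑ p, M p p := by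
          rw [Finset.sum_congr rfl (fun p _ => Finset.sum_add_distrib),
            Finset.sum_add_distrib, Finset.mul_sum]
          congr 1
          refine Finset.sum_congr rfl fun p _ => ?_
          rw [Finset.sum_eq_single p]
          · simp
          · intro q _ hq; simp [Ne.symm hq]
          · simp
      _ = (lam : ℂ) + R := by
          rw [htrM, mul_one]
          congr 1
          rw [← hQψ]
          simp only [dotProduct, Matrix.mulVec, Pi.star_apply, Complex.star_def]
          rw [Finset.sum_comm]
          refine Finset.sum_congr rfl fun q _ => ?_
          simp only [Finset.mul_sum]
          refine Finset.sum_congr rfl fun p _ => ?_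
          ring
  have hS2 : (∑ p, ∑ q, W p q * M q p)
      = ∑ t, (c t : ℂ) * dotProduct (star (Ψ t)) (M.mulVec (Ψ t)) := by
    calc (∑ p, ∑ q, W p q * M q p)
        = ∑ p, ∑ q, ∑ t, (c t : ℂ) * (Ψ t p * conj (Ψ t q)) * M q p := by
          refine Finset.sum_congr rfl fun p _ => Finset.sum_congr rfl fun q _ => ?_
          rw [hWeq p q, Finset.sum_mul]
      _ = ∑ p, ∑ t, ∑ q, (c t : ℂ) * (Ψ t p * conj (Ψ t q)) * M q p :=
          Finset.sum_congr rfl fun p _ => Finset.sum_comm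
      _ = ∑ t, ∑ p, ∑ q, (c t : ℂ) * (Ψ t p * conj (Ψ t q)) * M q p :=
          Finset.sum_comm
      _ = ∑ t, ∑ q, ∑ p, (c t : ℂ) * (Ψ t p * conj (Ψ t q)) * M q p :=
          Finset.sum_congr rfl fun t _ => Finset.sum_comm
      _ = ∑ t, (c t : ℂ) * dotProduct (star (Ψ t)) (M.mulVec (Ψ t)) := by
          refine Finset.sum_congr rfl fun t _ => ?_
          simp only [dotProduct, Matrix.mulVec, Pi.star_apply, Complex.star_def,
            Finset.mul_sum]
          refine Finset.sum_congr rfl fun q _ => Finset.sum_congr rfl fun p _ => ?_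
          ring
  -- real version
  have hsum : (∑ t, c t * (dotProduct (star (Ψ t)) (M.mulVec (Ψ t))).re) = lam + R := by
    have := hS2.symm.trans hS1
    have hre := congrArg Complex.re this
    rw [Complex.re_sum] at hre
    simp only [Complex.re_ofReal_mul] at hre
    simpa using hre
  -- find a bad t
  have hexy : ∃ t, c t * (dotProduct (star (Ψ t)) (M.mulVec (Ψ t))).re < 0 := by
    by_contra h
    push_neg at h
    have : (0:ℝ) ≤ ∑ t, c t * (dotProduct (star (Ψ t)) (M.mulVec (Ψ t))).re :=
      Finset.sum_nonneg fun t _ => h t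
    rw [hsum] at this
    linarith
  obtain ⟨t, ht⟩ := hexy
  have hQt : (dotProduct (star (Ψ t)) (M.mulVec (Ψ t))).re < 0 := by
    by_contra h
    push_neg at h
    exact absurd (mul_nonneg (hc t) h) (not_le.mpr ht)
  -- normalize Ψ t
  set s : ℝ := ∑ p, ‖Ψ t p‖ ^ 2 with hsdef
  have hs0 : 0 ≤ s := Finset.sum_nonneg fun p _ => sq_nonneg _
  have hsne : s ≠ 0 := by
    intro h0
    have hz : ∀ p : Fin d × Fin d, Ψ t p = 0 := by
      intro p
      have := (Finset.sum_eq_zero_iff_of_nonneg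
        (fun p _ => sq_nonneg ‖Ψ t p‖)).mp h0 p (Finset.mem_univ p)
      simpa [pow_eq_zero_iff] using this
    have : dotProduct (star (Ψ t)) (M.mulVec (Ψ t)) = 0 := by
      simp [dotProduct, hz]
    rw [this] at hQt
    simp at hQt
  have hspos : 0 < s := lt_of_le_of_ne hs0 (Ne.symm hsne)
  set r : ℝ := (Real.sqrt s)⁻¹ with hrdef
  have hrpos : 0 < r := by positivity
  refine ⟨fun p => (r : ℂ) * Ψ t p, ?_, ?_, ?_⟩
  · obtain ⟨a, b, hab⟩ := hrank t
    refine ⟨fun i x => (r : ℂ) * a i x, b, fun p => ?_⟩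
    show (r : ℂ) * Ψ t p = _
    rw [hab p, Finset.mul_sum]
    exact Finset.sum_congr rfl fun i _ => by ring
  · have : ∀ p : Fin d × Fin d, ‖(r : ℂ) * Ψ t p‖ ^ 2 = r ^ 2 * ‖Ψ t p‖ ^ 2 := by
      intro p
      rw [norm_mul, mul_pow, Complex.norm_real, Real.norm_eq_abs, sq_abs]
    rw [Finset.sum_congr rfl (fun p _ => this p), ← Finset.mul_sum, ← hsdef, hrdef]
    rw [inv_pow, Real.sq_sqrt hs0]
    exact inv_mul_cancel₀ hsne
  · have hkey : dotProduct (star fun p => (r : ℂ) * Ψ t p)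
        (M.mulVec fun p => (r : ℂ) * Ψ t p)
        = ((r ^ 2 : ℝ) : ℂ) * dotProduct (star (Ψ t)) (M.mulVec (Ψ t)) := by
      simp only [dotProduct, Matrix.mulVec, Pi.star_apply, Complex.star_def,
        Finset.mul_sum]
      refine Finset.sum_congr rfl fun q _ => ?_
      simp only [Finset.mul_sum, map_mul, Complex.conj_ofReal]
      refine Finset.sum_congr rfl fun p _ => ?_
      push_cast
      ring
    rw [hkey, Complex.re_ofReal_mul]
    have : 0 < r ^ 2 := by positivity
    exact mul_neg_of_pos_of_neg this hQt
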